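/- Let A be a symmetric n×n matrix with entries in {0,1}, with eigenvalues λ_1 ≥ λ_2 ≥ ⋯ ≥ λ_n. Then the sum of the squares of all eigenvalues except the largest satisfies λ_2² + λ_3² + ⋯ + λ_n² ≤ n²/4. -/

import Mathlib

open Matrix Finset

/-- For a symmetric `n × n` `(0,1)`-matrix `A` with eigenvalues `μ` in
nonincreasing order, the sum of the squares of all eigenvalues except the largest satisfies
`λ_2² + ⋯ + λ_n² ≤ n²/4`. -/
theorem sum_sq_eigenvalues_except_top (n : ℕ) (hn : 0 < n)
    (A : Matrix (Fin n) (Fin n) ℝ) (hA : A.IsHermitian)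
    (hA01 : ∀ a b, A a b = 0 ∨ A a b = 1)
    (μ : Fin n → ℝ) (hmono : Antitone μ)
    (hperm : Finset.univ.val.map μ = Finset.univ.val.map hA.eigenvalues) :
    ∑ k ∈ Finset.univ.erase (⟨0, hn⟩ : Fin n), μ k ^ 2 ≤ (n : ℝ) ^ 2 / 4 := by
  classical
  set U : Matrix (Fin n) (Fin n) ℝ := (hA.eigenvectorUnitary : Matrix (Fin n) (Fin n) ℝ) with hU
  set V : Matrix (Fin n) (Fin n) ℝ := star U with hV
  set D : Matrix (Fin n) (Fin n) ℝ := Matrix.diagonal hA.eigenvalues with hD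
  have hVU : V * U = 1 := by
    rw [hV, hU]; exact Unitary.coe_star_mul_self hA.eigenvectorUnitary
  have hUV : U * V = 1 := by
    rw [hV, hU]; exact Unitary.coe_mul_star_self hA.eigenvectorUnitary
  have hVt : V = Uᵀ := by
    ext i j
    simp [hV, Matrix.star_eq_conjTranspose, Matrix.conjTranspose_apply]
  have hspec : A = U * D * V := by
    have h := hA.spectral_theorem
    simpa [hU, hV, hD, Function.comp] using h
  set S : ℝ := ∑ i, ∑ j, A i j with hSdef
  -- trace(A*A) = sum of eigenvalue squares
  have htr1 : Matrix.trace (A * A) = ∑ i, hA.eigenvalues i ^ 2 := by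
    conv_lhs => rw [hspec]
    rw [show U * D * V * (U * D * V) = U * (D * (V * U) * D) * V by
      simp only [Matrix.mul_assoc]]
    rw [hVU, Matrix.mul_one, Matrix.trace_mul_comm, ← Matrix.mul_assoc, hVU, Matrix.one_mul,
      hD, Matrix.diagonal_mul_diagonal, Matrix.trace_diagonal]
    simp [sq]
  have htr2 : Matrix.trace (A * A) = S := by
    rw [Matrix.trace, hSdef]
    refine Finset.sum_congr rfl fun i _ => ?_
    rw [Matrix.diag_apply, Matrix.mul_apply]
    refine Finset.sum_congr rfl fun j _ => ?_
    have hsym : A j i = A i j := by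
      have := congrFun (congrFun hA j) i
      simpa [Matrix.conjTranspose_apply] using this.symm
    rw [hsym]
    rcases hA01 i j with h | h <;> simp [h]
  -- Rayleigh bound
  set x : Fin n → ℝ := fun _ => 1 with hx
  set y : Fin n → ℝ := V *ᵥ x with hy
  have hμ0 : ∀ i, hA.eigenvalues i ≤ μ ⟨0, hn⟩ := by
    intro i
    have hmem : hA.eigenvalues i ∈ Finset.univ.val.map hA.eigenvalues :=
      Multiset.mem_map_of_mem _ (Finset.mem_univ i)
    rw [← hperm, Multiset.mem_map] at hmem
    obtain ⟨k, -, hk⟩ := hmem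
    rw [← hk]
    exact hmono (by exact Fin.mk_le_of_le_val (Nat.zero_le _))
  have hxAx : x ⬝ᵥ (A *ᵥ x) = S := by
    simp [hSdef, dotProduct, Matrix.mulVec, hx]
  have hVtU : Vᵀ = U := by rw [hVt, Matrix.transpose_transpose]
  have hyU : x ᵥ* U = y := by rw [hy, hVt, Matrix.mulVec_transpose]
  have hxAx2 : x ⬝ᵥ (A *ᵥ x) = ∑ i, hA.eigenvalues i * y i ^ 2 := by
    conv_lhs => rw [hspec]
    rw [Matrix.dotProduct_mulVec, ← Matrix.vecMul_vecMul, ← Matrix.vecMul_vecMul, hyU,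
      ← Matrix.dotProduct_mulVec, ← hy]
    simp only [dotProduct, hD, Matrix.vecMul_diagonal]
    exact Finset.sum_congr rfl fun i _ => by ring
  have hy2 : ∑ i, y i ^ 2 = (n : ℝ) := by
    have h1 : ∑ i, y i ^ 2 = y ⬝ᵥ y := by simp [dotProduct, sq]
    rw [h1, hy, Matrix.dotProduct_mulVec, ← Matrix.mulVec_transpose, Matrix.mulVec_mulVec,
      hVtU, hUV, Matrix.one_mulVec]
    simp [hx, dotProduct]
  have hS0 : 0 ≤ S := by
    refine Finset.sum_nonneg fun i _ => Finset.sum_nonneg fun j _ => ?_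
    rcases hA01 i j with h | h <;> simp [h]
  have hSle : S ≤ μ ⟨0, hn⟩ * n := by
    rw [← hxAx, hxAx2, ← hy2, Finset.mul_sum]
    exact Finset.sum_le_sum fun i _ =>
      mul_le_mul_of_nonneg_right (hμ0 i) (sq_nonneg _)
  have hsum : ∑ k, μ k ^ 2 = ∑ i, hA.eigenvalues i ^ 2 := by
    have h := congrArg (fun m : Multiset ℝ => (m.map fun t => t ^ 2).sum) hperm
    simpa [Multiset.map_map, Function.comp_def, Finset.sum] using h
  have herase : ∑ k ∈ Finset.univ.erase (⟨0, hn⟩ : Fin n), μ k ^ 2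
      = (∑ k, μ k ^ 2) - μ ⟨0, hn⟩ ^ 2 := by
    exact Finset.sum_erase_eq_sub (Finset.mem_univ _)
  have hnpos : (0 : ℝ) < n := Nat.cast_pos.mpr hn
  have hμ0nn : 0 ≤ μ ⟨0, hn⟩ := by
    by_contra h
    push_neg at h
    have : μ ⟨0, hn⟩ * n < 0 := mul_neg_of_neg_of_pos h hnpos
    linarith
  rw [herase, hsum, ← htr1, htr2]
  nlinarith [sq_nonneg ((n : ℝ) ^ 2 - 2 * S), sq_nonneg (μ ⟨0, hn⟩ * n - S),
    mul_nonneg (sub_nonneg.2 hSle) (add_nonneg (mul_nonneg hμ0nn hnpos.le) hS0),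
    mul_pos hnpos hnpos]
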